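/- Let H be a connected bipartite graph with bipartition {V1, V2}, |V_i| = n_i, Delta_i the maximum degree among vertices of V_i, and define beta(H) = n_1*Delta_1 + n_2*Delta_2. Then the 2-color size-Ramsey number of H satisfies R̂(H) ≥ beta(H)/4; that is, every graph G with fewer than beta(H)/4 edges admits a 2-coloring of its edges with no monochromatic copy of H. -/

import Mathlib

open SimpleGraph Finset

/-- `H` has a copy in `G`: an injective graph homomorphism from `H` to `G`. -/
def HasCopy {W V : Type*} (H : SimpleGraph W) (G : SimpleGraph V) : Prop :=
  ∃ f : H →g G, Function.Injective f

/-- Under the `r`-edge-coloring `c`, some color class of `G` contains a copy of `H`. -/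
def HasMonoCopy {W V : Type*} (H : SimpleGraph W) (G : SimpleGraph V)
    {r : ℕ} (c : Sym2 V → Fin r) : Prop :=
  ∃ i : Fin r, HasCopy H (SimpleGraph.fromRel fun u v => G.Adj u v ∧ c s(u, v) = i)

/-- Degree of a vertex, as the natural cardinality of its neighbor set. -/
noncomputable def deg {V : Type*} (G : SimpleGraph V) (v : V) : ℕ := (G.neighborSet v).ncard

private lemma walk_iff {W : Type*} {H : SimpleGraph W} (hconn : H.Connected)
    {Q : W → Prop} (hstep : ∀ a b, H.Adj a b → (Q a ↔ Q b)) (v w : W) : Q v ↔ Q w := by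
  obtain ⟨p⟩ := hconn.preconnected v w
  induction p with
  | nil => exact Iff.rfl
  | cons h _ ih => exact (hstep _ _ h).trans ih

private lemma main_lemma {W : Type*} [Fintype W] [DecidableEq W] (H : SimpleGraph W)
    (V1 V2 : Finset W) (hdisj : Disjoint V1 V2)
    (hbip : ∀ u v, H.Adj u v → (u ∈ V1 ∧ v ∈ V2) ∨ (u ∈ V2 ∧ v ∈ V1))
    (hconn : H.Connected)
    {V : Type*} [Fintype V] (G : SimpleGraph V)
    (hlt : 2 * G.edgeSet.ncard < V1.card * (V1.sup (deg H))) :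
    ∃ c : Sym2 V → Fin 2, ¬ HasMonoCopy H G c := by
  classical
  set Δ : ℕ := V1.sup (deg H) with hΔdef
  set B : Finset V := univ.filter (fun x => Δ ≤ G.degree x) with hBdef
  have hecard : G.edgeSet.ncard = G.edgeFinset.card := by
    rw [Set.ncard_eq_toFinset_card']
    congr 1
  have hsum : ∑ x : V, G.degree x < V1.card * Δ := by
    rw [SimpleGraph.sum_degrees_eq_twice_card_edges]
    rw [hecard] at hlt
    exact hlt
  have hBcard : B.card < V1.card := by
    have h1 : B.card * Δ ≤ ∑ x ∈ B, G.degree x := by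
      have h0 : ∑ _x ∈ B, Δ ≤ ∑ x ∈ B, G.degree x :=
        Finset.sum_le_sum (fun x hx => (Finset.mem_filter.mp hx).2)
      simpa [mul_comm] using h0
    have h2 : ∑ x ∈ B, G.degree x ≤ ∑ x : V, G.degree x :=
      Finset.sum_le_sum_of_subset (Finset.subset_univ B)
    have h3 : B.card * Δ < V1.card * Δ := lt_of_le_of_lt (h1.trans h2) hsum
    exact lt_of_mul_lt_mul_right h3 (Nat.zero_le _)
  have hV1ne : V1.Nonempty := by
    rcases Finset.eq_empty_or_nonempty V1 with h | h
    · rw [h] at hlt; simp at hlt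
    · exact h
  obtain ⟨u, huV1, husup⟩ := Finset.exists_mem_eq_sup V1 hV1ne (deg H)
  have hsymm : ∀ x y : V, (if ((x ∈ B) ↔ (y ∈ B)) then (0 : Fin 2) else 1)
      = (if ((y ∈ B) ↔ (x ∈ B)) then (0 : Fin 2) else 1) := fun x y =>
    if_congr iff_comm rfl rfl
  refine ⟨Sym2.lift ⟨fun x y => if ((x ∈ B) ↔ (y ∈ B)) then (0 : Fin 2) else 1, hsymm⟩, ?_⟩
  rintro ⟨i, f, hinj⟩
  have hadj : ∀ {a b : W}, H.Adj a b → G.Adj (f a) (f b) ∧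
      (if ((f a ∈ B) ↔ (f b ∈ B)) then (0 : Fin 2) else 1) = i := by
    intro a b hab
    have h2 := f.map_adj hab
    rw [SimpleGraph.fromRel_adj] at h2
    obtain ⟨hne, h | h⟩ := h2
    · refine ⟨h.1, ?_⟩
      have hc := h.2
      rwa [Sym2.lift_mk] at hc
    · refine ⟨h.1.symm, ?_⟩
      have hc := h.2
      rw [Sym2.eq_swap, Sym2.lift_mk] at hc
      exact hc
  have hdeg : ∀ v : W, deg H v ≤ G.degree (f v) := by
    intro v
    have himg : (⇑f '' (H.neighborSet v)) ⊆ G.neighborSet (f v) := by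
      rintro _ ⟨w, hw, rfl⟩
      exact (hadj hw).1
    have h1 : (H.neighborSet v).ncard = (⇑f '' (H.neighborSet v)).ncard :=
      (Set.ncard_image_of_injective _ hinj).symm
    have h2 : (⇑f '' (H.neighborSet v)).ncard ≤ (G.neighborSet (f v)).ncard :=
      Set.ncard_le_ncard himg (Set.toFinite _)
    have h3 : (G.neighborSet (f v)).ncard = G.degree (f v) := by
      rw [Set.ncard_eq_toFinset_card', Set.toFinset_card,
        SimpleGraph.card_neighborSet_eq_degree]
    calc deg H v = (H.neighborSet v).ncard := rfl
    _ = (⇑f '' (H.neighborSet v)).ncard := h1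
    _ ≤ (G.neighborSet (f v)).ncard := h2
    _ = G.degree (f v) := h3
  have hBu : f u ∈ B := by
    refine Finset.mem_filter.mpr ⟨Finset.mem_univ _, ?_⟩
    exact le_trans (le_of_eq (hΔdef.trans husup)) (hdeg u)
  have hall : ∀ v ∈ V1, f v ∈ B := by
    fin_cases i
    · -- color 0 : edges stay on the same side of the cut (B, Bᶜ)
      have hstep : ∀ a b, H.Adj a b → ((f a ∈ B) ↔ (f b ∈ B)) := by
        intro a b hab
        have h := (hadj hab).2
        by_cases hP : ((f a ∈ B) ↔ (f b ∈ B))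
        · exact hP
        · rw [if_neg hP] at h
          exact absurd h (by decide)
      intro v _
      exact (walk_iff hconn (Q := fun w => f w ∈ B) hstep v u).mpr hBu
    · -- color 1 : edges cross the cut (B, Bᶜ)
      have hstep : ∀ a b, H.Adj a b → ¬((f a ∈ B) ↔ (f b ∈ B)) := by
        intro a b hab
        have h := (hadj hab).2
        by_cases hP : ((f a ∈ B) ↔ (f b ∈ B))
        · rw [if_pos hP] at h
          exact absurd h (by decide)
        · exact hP
      have hside : ∀ a b, H.Adj a b → ((a ∈ V1) ↔ ¬(b ∈ V1)) := by
        intro a b hab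
        rcases hbip a b hab with ⟨ha, hb⟩ | ⟨ha, hb⟩
        · exact iff_of_true ha (Finset.disjoint_right.mp hdisj hb)
        · exact iff_of_false (Finset.disjoint_right.mp hdisj ha) (not_not_intro hb)
      have hTstep : ∀ a b, H.Adj a b →
          ((((a ∈ V1) ↔ (f a ∈ B))) ↔ (((b ∈ V1) ↔ (f b ∈ B)))) := by
        intro a b hab
        have h1 := hstep a b hab
        have h2 := hside a b hab
        tauto
      intro v hv
      have hT := (walk_iff hconn (Q := fun w => ((w ∈ V1) ↔ (f w ∈ B))) hTstep v u).mpr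
        (iff_of_true huV1 hBu)
      exact hT.mp hv
  have hcard : V1.card ≤ B.card := by
    have hsub : V1.image ⇑f ⊆ B := by
      intro x hx
      obtain ⟨v, hv, rfl⟩ := Finset.mem_image.mp hx
      exact hall v hv
    calc V1.card = (V1.image ⇑f).card := (Finset.card_image_of_injective V1 hinj).symm
    _ ≤ B.card := Finset.card_le_card hsub
  omega

theorem stmt_4 {W : Type*} [Fintype W] [DecidableEq W] (H : SimpleGraph W)
    (V1 V2 : Finset W) (hdisj : Disjoint V1 V2) (hcover : V1 ∪ V2 = Finset.univ)
    (hbip : ∀ u v, H.Adj u v → (u ∈ V1 ∧ v ∈ V2) ∨ (u ∈ V2 ∧ v ∈ V1))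
    (hconn : H.Connected)
    {V : Type*} [Fintype V] (G : SimpleGraph V)
    (hE : 4 * G.edgeSet.ncard <
      V1.card * (V1.sup (deg H)) + V2.card * (V2.sup (deg H))) :
    ∃ c : Sym2 V → Fin 2, ¬ HasMonoCopy H G c := by
  rcases le_total (V2.card * (V2.sup (deg H))) (V1.card * (V1.sup (deg H))) with h | h
  · exact main_lemma H V1 V2 hdisj hbip hconn G (by linarith)
  · exact main_lemma H V2 V1 hdisj.symm (fun u v hadj => (hbip u v hadj).symm) hconn G
      (by linarith)
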